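/- arXiv:1712.06391 — 4 statements merged into one kernel-verified Lean document; each statement's English description precedes it below -/
import Mathlib

section
/- Let (X, 𝒜, μ) be a measure space and let p_d, p_g : X → ℝ be measurable functions with p_d ≥ 0 and p_g ≥ 0. Define D* : X → ℝ by D*(x) = (b·p_d(x) + a·p_g(x))/(p_d(x) + p_g(x)) when p_d(x) + p_g(x) > 0 and D*(x) = 0 otherwise. Then for every measurable function D : X → ℝ, the LSGAN discriminator objective satisfies V(D) ≥ V(D*), where V(D) = (1/2)∫ p_d(x)·(D(x) − b)² dμ(x) + (1/2)∫ p_g(x)·(D(x) − a)² dμ(x), the integrals being Lebesgue integrals of nonnegative functions with values in [0, ∞]. In other words, D* is an optimal discriminator for a fixed generator. -/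
open MeasureTheory ENNReal

/-- Proposition 1 of the LSGAN paper: for a fixed generator, the discriminator
`D*(x) = (b·p_d(x) + a·p_g(x))/(p_d(x) + p_g(x))` (and `0` where `p_d + p_g` is
not positive) minimizes the least-squares discriminator objective. -/
theorem lsgan_optimal_discriminator
    {X : Type*} [MeasurableSpace X] (μ : Measure X)
    (pd pg : X → ℝ) (hpd : Measurable pd) (hpg : Measurable pg)
    (hpd0 : ∀ x, 0 ≤ pd x) (hpg0 : ∀ x, 0 ≤ pg x) (a b : ℝ)
    (Dstar : X → ℝ)
    (hDstar : ∀ x, Dstar x =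
      if 0 < pd x + pg x then (b * pd x + a * pg x) / (pd x + pg x) else 0)
    (D : X → ℝ) (hD : Measurable D) :
    (1/2) * (∫⁻ x, ENNReal.ofReal (pd x * (D x - b)^2) ∂μ)
      + (1/2) * (∫⁻ x, ENNReal.ofReal (pg x * (D x - a)^2) ∂μ)
    ≥ (1/2) * (∫⁻ x, ENNReal.ofReal (pd x * (Dstar x - b)^2) ∂μ)
      + (1/2) * (∫⁻ x, ENNReal.ofReal (pg x * (Dstar x - a)^2) ∂μ) := by
  -- pointwise real inequality
  have key : ∀ x, pd x * (Dstar x - b)^2 + pg x * (Dstar x - a)^2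
      ≤ pd x * (D x - b)^2 + pg x * (D x - a)^2 := by
    intro x
    rw [hDstar x]
    by_cases h : 0 < pd x + pg x
    · simp only [if_pos h]
      set s := pd x + pg x with hs
      have hsne : s ≠ 0 := ne_of_gt h
      set t := (b * pd x + a * pg x) / s with htdef
      have hid : pd x * (D x - b)^2 + pg x * (D x - a)^2
          - (pd x * (t - b)^2 + pg x * (t - a)^2) = s * (D x - t)^2 := by
        rw [htdef, hs]
        have hsne' : pd x + pg x ≠ 0 := ne_of_gt h
        field_simp
        ring
      nlinarith [mul_nonneg h.le (sq_nonneg (D x - t)), hid]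
    · have hpd' : pd x = 0 := by
        have := hpd0 x; have := hpg0 x; push_neg at h; linarith
      have hpg' : pg x = 0 := by
        have := hpd0 x; have := hpg0 x; push_neg at h; linarith
      simp only [hpd', hpg', zero_mul, add_zero, zero_add]
      positivity

  have hDm : Measurable Dstar := by
    have : Dstar = fun x =>
        if 0 < pd x + pg x then (b * pd x + a * pg x) / (pd x + pg x) else 0 :=
      funext hDstar
    rw [this]
    exact Measurable.ite (measurableSet_lt measurable_const (hpd.add hpg))
      (((hpd.const_mul b).add (hpg.const_mul a)).div (hpd.add hpg)) measurable_const
  have m1 : Measurable fun x => ENNReal.ofReal (pd x * (D x - b)^2) :=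
    (hpd.mul ((hD.sub measurable_const).pow_const 2)).ennreal_ofReal
  have m1' : Measurable fun x => ENNReal.ofReal (pd x * (Dstar x - b)^2) :=
    (hpd.mul ((hDm.sub measurable_const).pow_const 2)).ennreal_ofReal
  have sum_le : (∫⁻ x, ENNReal.ofReal (pd x * (Dstar x - b)^2) ∂μ)
      + (∫⁻ x, ENNReal.ofReal (pg x * (Dstar x - a)^2) ∂μ)
      ≤ (∫⁻ x, ENNReal.ofReal (pd x * (D x - b)^2) ∂μ)
      + (∫⁻ x, ENNReal.ofReal (pg x * (D x - a)^2) ∂μ) := by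
    rw [← lintegral_add_left m1', ← lintegral_add_left m1]
    refine lintegral_mono fun x => ?_
    have h1 : 0 ≤ pd x * (Dstar x - b)^2 := mul_nonneg (hpd0 x) (sq_nonneg _)
    have h2 : 0 ≤ pg x * (Dstar x - a)^2 := mul_nonneg (hpg0 x) (sq_nonneg _)
    have h3 : 0 ≤ pd x * (D x - b)^2 := mul_nonneg (hpd0 x) (sq_nonneg _)
    have h4 : 0 ≤ pg x * (D x - a)^2 := mul_nonneg (hpg0 x) (sq_nonneg _)
    rw [← ENNReal.ofReal_add h1 h2, ← ENNReal.ofReal_add h3 h4]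
    exact ENNReal.ofReal_le_ofReal (key x)
  calc (1/2 : ℝ≥0∞) * (∫⁻ x, ENNReal.ofReal (pd x * (Dstar x - b)^2) ∂μ)
      + (1/2) * (∫⁻ x, ENNReal.ofReal (pg x * (Dstar x - a)^2) ∂μ)
      = (1/2) * ((∫⁻ x, ENNReal.ofReal (pd x * (Dstar x - b)^2) ∂μ)
        + (∫⁻ x, ENNReal.ofReal (pg x * (Dstar x - a)^2) ∂μ)) := by ring
    _ ≤ (1/2) * ((∫⁻ x, ENNReal.ofReal (pd x * (D x - b)^2) ∂μ)
        + (∫⁻ x, ENNReal.ofReal (pg x * (D x - a)^2) ∂μ)) := by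
          exact mul_le_mul_right sum_le _
    _ = (1/2) * (∫⁻ x, ENNReal.ofReal (pd x * (D x - b)^2) ∂μ)
        + (1/2) * (∫⁻ x, ENNReal.ofReal (pg x * (D x - a)^2) ∂μ) := by ring
end

section
/- Let (X, 𝒜, μ) be a measure space, let p_d, p_g : X → ℝ be measurable functions with p_d ≥ 0 and p_g ≥ 0, and let D* be defined by D*(x) = (b·p_d(x) + a·p_g(x))/(p_d(x) + p_g(x)) when p_d(x) + p_g(x) > 0 and D*(x) = 0 otherwise. If a measurable function D : X → ℝ satisfies V(D) = V(D*) < ∞, where V(D) = (1/2)∫ p_d(x)·(D(x) − b)² dμ(x) + (1/2)∫ p_g(x)·(D(x) − a)² dμ(x), then D(x) = D*(x) for μ-almost every x in the set {x : p_d(x) + p_g(x) > 0}. -/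
open MeasureTheory ENNReal

/-- Uniqueness part of Proposition 1 of the LSGAN paper: if a measurable
discriminator `D` attains the (finite) optimal value of the least-squares
objective, then `D = D*` μ-a.e. on the set where `p_d + p_g > 0`. -/
theorem lsgan_optimal_discriminator_unique
    {X : Type*} [MeasurableSpace X] (μ : Measure X)
    (pd pg : X → ℝ) (hpd : Measurable pd) (hpg : Measurable pg)
    (hpd0 : ∀ x, 0 ≤ pd x) (hpg0 : ∀ x, 0 ≤ pg x) (a b : ℝ)
    (Dstar : X → ℝ)
    (hDstar : ∀ x, Dstar x =
      if 0 < pd x + pg x then (b * pd x + a * pg x) / (pd x + pg x) else 0)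
    (D : X → ℝ) (hD : Measurable D)
    (heq : (1/2) * (∫⁻ x, ENNReal.ofReal (pd x * (D x - b)^2) ∂μ)
        + (1/2) * (∫⁻ x, ENNReal.ofReal (pg x * (D x - a)^2) ∂μ)
      = (1/2) * (∫⁻ x, ENNReal.ofReal (pd x * (Dstar x - b)^2) ∂μ)
        + (1/2) * (∫⁻ x, ENNReal.ofReal (pg x * (Dstar x - a)^2) ∂μ))
    (hfin : (1/2) * (∫⁻ x, ENNReal.ofReal (pd x * (Dstar x - b)^2) ∂μ)
        + (1/2) * (∫⁻ x, ENNReal.ofReal (pg x * (Dstar x - a)^2) ∂μ) < ⊤) :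
    ∀ᵐ x ∂μ, x ∈ {x | 0 < pd x + pg x} → D x = Dstar x := by
  have hDs : Measurable Dstar := by
    have hfun : Dstar = fun x =>
        if 0 < pd x + pg x then (b * pd x + a * pg x) / (pd x + pg x) else 0 :=
      funext hDstar
    rw [hfun]
    exact Measurable.ite (measurableSet_lt measurable_const (hpd.add hpg))
      (((hpd.const_mul b).add (hpg.const_mul a)).div (hpd.add hpg)) measurable_const
  -- pointwise key identity
  have key : ∀ x, pd x * (D x - b)^2 + pg x * (D x - a)^2
      = (pd x + pg x) * (D x - Dstar x)^2
        + (pd x * (Dstar x - b)^2 + pg x * (Dstar x - a)^2) := by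
    intro x
    rw [hDstar x]
    by_cases h : 0 < pd x + pg x
    · rw [if_pos h]
      have hne : pd x + pg x ≠ 0 := ne_of_gt h
      field_simp
      ring
    · have h1 : pd x = 0 := by nlinarith [hpd0 x, hpg0 x]
      have h2 : pg x = 0 := by nlinarith [hpd0 x, hpg0 x]
      simp [if_neg h, h1, h2]
  -- abbreviations
  set A := ∫⁻ x, ENNReal.ofReal (pd x * (D x - b)^2) ∂μ with hAdef
  set B := ∫⁻ x, ENNReal.ofReal (pg x * (D x - a)^2) ∂μ with hBdef
  set A' := ∫⁻ x, ENNReal.ofReal (pd x * (Dstar x - b)^2) ∂μ with hA'def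
  set B' := ∫⁻ x, ENNReal.ofReal (pg x * (Dstar x - a)^2) ∂μ with hB'def
  set G := ∫⁻ x, ENNReal.ofReal ((pd x + pg x) * (D x - Dstar x)^2) ∂μ with hGdef
  have m1 : Measurable fun x => ENNReal.ofReal (pd x * (D x - b)^2) :=
    (hpd.mul ((hD.sub measurable_const).pow measurable_const)).ennreal_ofReal
  have m2 : Measurable fun x => ENNReal.ofReal (pg x * (D x - a)^2) :=
    (hpg.mul ((hD.sub measurable_const).pow measurable_const)).ennreal_ofReal
  have m1' : Measurable fun x => ENNReal.ofReal (pd x * (Dstar x - b)^2) :=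
    (hpd.mul ((hDs.sub measurable_const).pow measurable_const)).ennreal_ofReal
  have m2' : Measurable fun x => ENNReal.ofReal (pg x * (Dstar x - a)^2) :=
    (hpg.mul ((hDs.sub measurable_const).pow measurable_const)).ennreal_ofReal
  have mG : Measurable fun x => ENNReal.ofReal ((pd x + pg x) * (D x - Dstar x)^2) :=
    ((hpd.add hpg).mul ((hD.sub hDs).pow measurable_const)).ennreal_ofReal
  have nn1 : ∀ x, 0 ≤ pd x * (D x - b)^2 := fun x => mul_nonneg (hpd0 x) (sq_nonneg _)
  have nn2 : ∀ x, 0 ≤ pg x * (D x - a)^2 := fun x => mul_nonneg (hpg0 x) (sq_nonneg _)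
  have nn1' : ∀ x, 0 ≤ pd x * (Dstar x - b)^2 := fun x => mul_nonneg (hpd0 x) (sq_nonneg _)
  have nn2' : ∀ x, 0 ≤ pg x * (Dstar x - a)^2 := fun x => mul_nonneg (hpg0 x) (sq_nonneg _)
  have nnG : ∀ x, 0 ≤ (pd x + pg x) * (D x - Dstar x)^2 :=
    fun x => mul_nonneg (add_nonneg (hpd0 x) (hpg0 x)) (sq_nonneg _)
  -- A + B = G + (A' + B')
  have hsum : A + B = G + (A' + B') := by
    rw [hAdef, hBdef, ← lintegral_add_left m1]
    rw [hGdef, hA'def, hB'def, ← lintegral_add_left m1', ← lintegral_add_left mG]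
    refine lintegral_congr fun x => ?_
    rw [← ENNReal.ofReal_add (nn1 x) (nn2 x),
      ← ENNReal.ofReal_add (nn1' x) (nn2' x),
      ← ENNReal.ofReal_add (nnG x) (add_nonneg (nn1' x) (nn2' x))]
    exact congrArg ENNReal.ofReal (key x)
  have half_ne : (1/2 : ℝ≥0∞) ≠ 0 := by norm_num
  have half_ne_top : (1/2 : ℝ≥0∞) ≠ ⊤ := by norm_num
  -- A + B = A' + B'
  have hAB : A + B = A' + B' := by
    have h : (1/2 : ℝ≥0∞) * (A + B) = (1/2) * (A' + B') := by
      rw [mul_add, mul_add]; exact heq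
    exact (ENNReal.mul_right_inj half_ne half_ne_top).mp h
  have hS_ne_top : A' + B' ≠ ⊤ := by
    intro h
    rw [show (1/2 : ℝ≥0∞) * A' + (1/2) * B' = (1/2) * (A' + B') by rw [mul_add],
      h, ENNReal.mul_top half_ne] at hfin
    exact (lt_irrefl _ hfin)
  have hG0 : G = 0 := by
    have h : G + (A' + B') = 0 + (A' + B') := by
      rw [zero_add, ← hsum, hAB]
    exact WithTop.add_right_cancel hS_ne_top h
  have hae : ∀ᵐ x ∂μ, ENNReal.ofReal ((pd x + pg x) * (D x - Dstar x)^2) = 0 :=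
    (lintegral_eq_zero_iff mG).mp hG0
  filter_upwards [hae] with x hx hxpos
  have hle : (pd x + pg x) * (D x - Dstar x)^2 ≤ 0 := by
    rwa [ENNReal.ofReal_eq_zero] at hx
  have hx2 : (D x - Dstar x)^2 = 0 := by
    have hpos : (0:ℝ) < pd x + pg x := hxpos
    nlinarith [sq_nonneg (D x - Dstar x)]
  have := pow_eq_zero_iff (n := 2) (by norm_num) |>.mp hx2
  linarith [this]
end

section
/- Let (X, 𝒜, μ) be a measure space, let p_d, p_g : X → ℝ be measurable with p_d ≥ 0 and p_g ≥ 0, and let real labels a, b, c satisfy b − c = 1 and b − a = 2. With D*(x) = (b·p_d(x) + a·p_g(x))/(p_d(x) + p_g(x)) when p_d(x) + p_g(x) > 0 and D*(x) = 0 otherwise, the LSGAN generator objective at the optimal discriminator satisfies 2C(G) := ∫ p_d(x)·(D*(x) − c)² dμ(x) + ∫ p_g(x)·(D*(x) − c)² dμ(x) = ∫_{\{p_d + p_g > 0\}} (2·p_g(x) − (p_d(x) + p_g(x)))² / (p_d(x) + p_g(x)) dμ(x), i.e., minimizing the LSGAN objective yields minimizing the Pearson χ² divergence between p_d + p_g and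 2·p_g. All integrals are Lebesgue integrals of nonnegative functions with values in [0, ∞]. -/
open MeasureTheory ENNReal

/-- Main theorem of the LSGAN paper: if the labels satisfy `b - c = 1` and
`b - a = 2`, then the LSGAN generator objective at the optimal discriminator
equals the Pearson χ² divergence between `p_d + p_g` and `2·p_g`. -/
theorem lsgan_yields_pearson_chi_squared
    {X : Type*} [MeasurableSpace X] (μ : Measure X)
    (pd pg : X → ℝ) (hpd : Measurable pd) (hpg : Measurable pg)
    (hpd0 : ∀ x, 0 ≤ pd x) (hpg0 : ∀ x, 0 ≤ pg x) (a b c : ℝ)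
    (hbc : b - c = 1) (hba : b - a = 2)
    (Dstar : X → ℝ)
    (hDstar : ∀ x, Dstar x =
      if 0 < pd x + pg x then (b * pd x + a * pg x) / (pd x + pg x) else 0) :
    (∫⁻ x, ENNReal.ofReal (pd x * (Dstar x - c)^2) ∂μ)
      + (∫⁻ x, ENNReal.ofReal (pg x * (Dstar x - c)^2) ∂μ)
    = ∫⁻ x in {x | 0 < pd x + pg x},
        ENNReal.ofReal ((2 * pg x - (pd x + pg x))^2 / (pd x + pg x)) ∂μ := by
  have hmeas : MeasurableSet {x | 0 < pd x + pg x} :=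
    measurableSet_lt measurable_const (hpd.add hpg)
  have hD : Measurable Dstar := by
    have : Dstar = fun x =>
        if 0 < pd x + pg x then (b * pd x + a * pg x) / (pd x + pg x) else 0 :=
      funext hDstar
    rw [this]
    exact Measurable.ite hmeas (((hpd.const_mul b).add (hpg.const_mul a)).div
      (hpd.add hpg)) measurable_const
  have key : ∀ x, ENNReal.ofReal (pd x * (Dstar x - c)^2)
      + ENNReal.ofReal (pg x * (Dstar x - c)^2)
      = {x | 0 < pd x + pg x}.indicator
          (fun x => ENNReal.ofReal ((2 * pg x - (pd x + pg x))^2 / (pd x + pg x))) x := by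
    intro x
    rw [← ENNReal.ofReal_add (mul_nonneg (hpd0 x) (sq_nonneg _))
      (mul_nonneg (hpg0 x) (sq_nonneg _))]
    by_cases h : 0 < pd x + pg x
    · have hx : x ∈ {x | 0 < pd x + pg x} := h
      rw [Set.indicator_of_mem hx]
      congr 1
      rw [hDstar x, if_pos h]
      have hne : pd x + pg x ≠ 0 := ne_of_gt h
      have hb : b = c + 1 := by linarith
      have ha : a = c - 1 := by linarith
      rw [hb, ha]
      field_simp
      ring
    · have hx : x ∉ {x | 0 < pd x + pg x} := h
      rw [Set.indicator_of_notMem hx]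
      have h1 : pd x = 0 := le_antisymm (by nlinarith [hpd0 x, hpg0 x]) (hpd0 x)
      have h2 : pg x = 0 := le_antisymm (by nlinarith [hpd0 x, hpg0 x]) (hpg0 x)
      simp [h1, h2]
  calc (∫⁻ x, ENNReal.ofReal (pd x * (Dstar x - c)^2) ∂μ)
      + (∫⁻ x, ENNReal.ofReal (pg x * (Dstar x - c)^2) ∂μ)
      = ∫⁻ x, (ENNReal.ofReal (pd x * (Dstar x - c)^2)
          + ENNReal.ofReal (pg x * (Dstar x - c)^2)) ∂μ := by
        rw [lintegral_add_left]
        exact (hpd.mul ((hD.sub measurable_const).pow measurable_const)).ennreal_ofReal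
    _ = ∫⁻ x, {x | 0 < pd x + pg x}.indicator
          (fun x => ENNReal.ofReal ((2 * pg x - (pd x + pg x))^2 / (pd x + pg x))) x ∂μ := by
        exact lintegral_congr key
    _ = ∫⁻ x in {x | 0 < pd x + pg x},
          ENNReal.ofReal ((2 * pg x - (pd x + pg x))^2 / (pd x + pg x)) ∂μ :=
        lintegral_indicator hmeas _
end

section
/- Let (X, 𝒜, μ) be a measure space, let p_d, p_g : X → ℝ be measurable with p_d ≥ 0 and p_g ≥ 0, and set a = −1, b = 1, c = 0. With D*(x) = (p_d(x) − p_g(x))/(p_d(x) + p_g(x)) when p_d(x) + p_g(x) > 0 and D*(x) = 0 otherwise, D* is the optimal discriminator for the objective V(D) = (1/2)∫ p_d(x)·(D(x) − 1)² dμ(x) + (1/2)∫ p_g(x)·(D(x) + 1)² dμ(x), i.e., V(D) ≥ V(D*) for every measurable D : X → ℝ, where the integrals are Lebesgue integrals of nonnegative functions with values in [0, ∞]. -/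
open MeasureTheory ENNReal

lemma lsgan_ptwise (p q t d : ℝ) (hp : 0 ≤ p) (hq : 0 ≤ q)
    (ht : t = if 0 < p + q then (p - q) / (p + q) else 0) :
    p * (t - 1)^2 + q * (t + 1)^2 ≤ p * (d - 1)^2 + q * (d + 1)^2 := by
  by_cases h : 0 < p + q
  · rw [ht, if_pos h]
    have key : ((p - q) / (p + q)) * (p + q) = p - q := div_mul_cancel₀ _ h.ne'
    nlinarith [sq_nonneg (d * (p + q) - (p - q)), mul_pos h h,
      mul_nonneg (mul_nonneg hp hq) (sq_nonneg (d + 1)),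
      mul_nonneg (mul_nonneg hp hq) (sq_nonneg (d - 1))]
  · have hp0 : p = 0 := by linarith
    have hq0 : q = 0 := by linarith
    simp [hp0, hq0]

/-- The LSGANs_(−110) parameter scheme (Eq. (12) of the LSGAN paper), with
labels `a = −1`, `b = 1`, `c = 0`: the optimal discriminator for the objective
`V(D) = (1/2)∫ p_d·(D − 1)² dμ + (1/2)∫ p_g·(D + 1)² dμ` is
`D*(x) = (p_d(x) − p_g(x))/(p_d(x) + p_g(x))` (and `0` where `p_d + p_g` is not
positive). -/
theorem lsgan_m110_optimal_discriminator
    {X : Type*} [MeasurableSpace X] (μ : Measure X)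
    (pd pg : X → ℝ) (hpd : Measurable pd) (hpg : Measurable pg)
    (hpd0 : ∀ x, 0 ≤ pd x) (hpg0 : ∀ x, 0 ≤ pg x)
    (Dstar : X → ℝ)
    (hDstar : ∀ x, Dstar x =
      if 0 < pd x + pg x then (pd x - pg x) / (pd x + pg x) else 0)
    (D : X → ℝ) (hD : Measurable D) :
    (1/2) * (∫⁻ x, ENNReal.ofReal (pd x * (D x - 1)^2) ∂μ)
      + (1/2) * (∫⁻ x, ENNReal.ofReal (pg x * (D x + 1)^2) ∂μ)
    ≥ (1/2) * (∫⁻ x, ENNReal.ofReal (pd x * (Dstar x - 1)^2) ∂μ)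
      + (1/2) * (∫⁻ x, ENNReal.ofReal (pg x * (Dstar x + 1)^2) ∂μ) := by
  have hDs : Measurable Dstar := by
    have : Dstar = fun x =>
        if 0 < pd x + pg x then (pd x - pg x) / (pd x + pg x) else 0 :=
      funext hDstar
    rw [this]
    exact Measurable.ite (measurableSet_lt measurable_const (hpd.add hpg))
      ((hpd.sub hpg).div (hpd.add hpg)) measurable_const
  have m1 : Measurable fun x => ENNReal.ofReal (pd x * (D x - 1)^2) :=
    (hpd.mul (((hD.sub measurable_const)).pow measurable_const)).ennreal_ofReal
  have m2 : Measurable fun x => ENNReal.ofReal (pd x * (Dstar x - 1)^2) :=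
    (hpd.mul (((hDs.sub measurable_const)).pow measurable_const)).ennreal_ofReal
  rw [← mul_add, ← mul_add, ← lintegral_add_left m1, ← lintegral_add_left m2]
  refine mul_le_mul_right (lintegral_mono fun x => ?_) _
  rw [← ENNReal.ofReal_add (mul_nonneg (hpd0 x) (sq_nonneg _))
        (mul_nonneg (hpg0 x) (sq_nonneg _)),
      ← ENNReal.ofReal_add (mul_nonneg (hpd0 x) (sq_nonneg _))
        (mul_nonneg (hpg0 x) (sq_nonneg _))]
  exact ENNReal.ofReal_le_ofReal
    (lsgan_ptwise (pd x) (pg x) (Dstar x) (D x) (hpd0 x) (hpg0 x) (hDstar x))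
end
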